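/- Let S = ⟨(3,0),(a₂,0),(0,1),(1,d₂),(2,d₂)⟩ ⊆ ℕ² with gcd(3,a₂)=1, a₂ > 3, d₂ ≥ 1, and (2,d₂) not in ⟨(3,0),(a₂,0),(0,1),(1,d₂)⟩. Then the gap set of S is {(h,t) : h ∈ H(T), 0 ≤ t ≤ d₂−1} where T = ⟨3,a₂⟩, and S has a unique maximal gap, namely (F(T), d₂−1). -/
import Mathlib

lemma memT_iff (a₂ n : ℕ) :
    n ∈ AddSubmonoid.closure ({3, a₂} : Set ℕ) ↔ ∃ i j : ℕ, 3 * i + a₂ * j = n := by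
  rw [AddSubmonoid.mem_closure_pair]
  constructor
  · rintro ⟨i, j, h⟩; exact ⟨i, j, by simpa [smul_eq_mul, mul_comm] using h⟩
  · rintro ⟨i, j, h⟩; exact ⟨i, j, by simpa [smul_eq_mul, mul_comm] using h⟩

lemma big_memT (a₂ n : ℕ) (hg : Nat.gcd 3 a₂ = 1) (ha : 3 < a₂) (hn : 2 * a₂ ≤ n) :
    ∃ i j : ℕ, 3 * i + a₂ * j = n := by
  have hnd : ¬ (3 ∣ a₂) := by
    intro h
    have h1 : 3 ∣ Nat.gcd 3 a₂ := Nat.dvd_gcd dvd_rfl h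
    omega
  have h3 : a₂ % 3 = 1 ∨ a₂ % 3 = 2 := by omega
  have hn3 : n % 3 = 0 ∨ n % 3 = 1 ∨ n % 3 = 2 := by omega
  rcases h3 with h | h <;> rcases hn3 with h' | h' | h'
  · exact ⟨n / 3, 0, by omega⟩
  · exact ⟨(n - a₂ * 1) / 3, 1, by omega⟩
  · exact ⟨(n - a₂ * 2) / 3, 2, by omega⟩
  · exact ⟨n / 3, 0, by omega⟩
  · exact ⟨(n - a₂ * 2) / 3, 2, by omega⟩
  · exact ⟨(n - a₂ * 1) / 3, 1, by omega⟩

/-- Maximal gaps of a submonoid of ℕ², w.r.t. the componentwise order. -/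
def FA2 (S : AddSubmonoid (ℕ × ℕ)) : Set (ℕ × ℕ) :=
  {h | h ∉ S ∧ ∀ g, g ∉ S → h ≤ g → g = h}

/-- gap set and unique maximal gap of
S = ⟨(3,0),(a₂,0),(0,1),(1,d₂),(2,d₂)⟩. -/
theorem gaps_and_unique_maximal_gap_third_class
    (a₂ d₂ : ℕ) (hg : Nat.gcd 3 a₂ = 1) (ha : 3 < a₂) (hd : 1 ≤ d₂)
    (hx : ((2 : ℕ), d₂) ∉ AddSubmonoid.closure {((3 : ℕ), (0 : ℕ)), (a₂, 0), (0, 1), (1, d₂)})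
    (T : AddSubmonoid ℕ) (hT : T = AddSubmonoid.closure {3, a₂})
    (S : AddSubmonoid (ℕ × ℕ))
    (hS : S = AddSubmonoid.closure {(3, 0), (a₂, 0), (0, 1), (1, d₂), (2, d₂)}) :
    {p : ℕ × ℕ | p ∉ S} = {p : ℕ × ℕ | p.1 ∉ T ∧ p.2 ≤ d₂ - 1} ∧
    FA2 S = {(sSup {n : ℕ | n ∉ T}, d₂ - 1)} := by
  subst hT hS
  set T := AddSubmonoid.closure ({3, a₂} : Set ℕ) with hT
  set S := AddSubmonoid.closure ({(3, 0), (a₂, 0), (0, 1), (1, d₂), (2, d₂)} : Set (ℕ × ℕ)) with hS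
  -- generators of S
  have g1 : ((3:ℕ), (0:ℕ)) ∈ S := AddSubmonoid.subset_closure (by simp)
  have g2 : ((a₂:ℕ), (0:ℕ)) ∈ S := AddSubmonoid.subset_closure (by simp)
  have g3 : ((0:ℕ), (1:ℕ)) ∈ S := AddSubmonoid.subset_closure (by simp)
  have g4 : ((1:ℕ), d₂) ∈ S := AddSubmonoid.subset_closure (by simp)
  have g5 : ((2:ℕ), d₂) ∈ S := AddSubmonoid.subset_closure (by simp)
  -- membership characterization
  have hmem : ∀ p : ℕ × ℕ, p ∈ S ↔ (p.1 ∈ T ∨ d₂ ≤ p.2) := by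
    intro p
    constructor
    · intro hp
      let M : AddSubmonoid (ℕ × ℕ) :=
        { carrier := {q : ℕ × ℕ | q.1 ∈ T ∨ d₂ ≤ q.2}
          zero_mem' := Or.inl (zero_mem T)
          add_mem' := by
            rintro a b (ha' | ha') (hb' | hb')
            · exact Or.inl (add_mem ha' hb')
            · exact Or.inr (le_trans hb' (by simp))
            · exact Or.inr (le_trans ha' (by simp))
            · exact Or.inr (le_trans ha' (by simp)) }
      have hle : S ≤ M := by
        rw [hS]
        apply AddSubmonoid.closure_le.mpr
        rintro q hq
        simp only [Set.mem_insert_iff, Set.mem_singleton_iff] at hq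
        rcases hq with rfl | rfl | rfl | rfl | rfl
        · exact Or.inl (AddSubmonoid.subset_closure (by simp))
        · exact Or.inl (AddSubmonoid.subset_closure (by simp))
        · exact Or.inl (zero_mem T)
        · exact Or.inr le_rfl
        · exact Or.inr le_rfl
      exact hle hp
    · rintro (hp | hp)
      · obtain ⟨i, j, hij⟩ := (memT_iff a₂ p.1).mp hp
        have : p = i • ((3:ℕ), (0:ℕ)) + j • (a₂, 0) + p.2 • (0, 1) := by
          ext <;> simp [Prod.smul_def, smul_eq_mul] <;> linarith [hij]
        rw [this]
        exact add_mem (add_mem (nsmul_mem g1 i) (nsmul_mem g2 j))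
          (nsmul_mem g3 p.2)
      · have hr : p.1 % 3 = 0 ∨ p.1 % 3 = 1 ∨ p.1 % 3 = 2 := by omega
        rcases hr with h | h | h
        · have : p = (p.1 / 3) • ((3:ℕ), (0:ℕ)) + p.2 • (0, 1) := by
            ext <;> simp [Prod.smul_def, smul_eq_mul] <;> omega
          rw [this]
          exact add_mem (nsmul_mem g1 _) (nsmul_mem g3 _)
        · have : p = (p.1 / 3) • ((3:ℕ), (0:ℕ)) + (1, d₂) + (p.2 - d₂) • (0, 1) := by
            ext <;> simp [Prod.smul_def, smul_eq_mul] <;> omega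
          rw [this]
          exact add_mem (add_mem (nsmul_mem g1 _) g4) (nsmul_mem g3 _)
        · have : p = (p.1 / 3) • ((3:ℕ), (0:ℕ)) + (2, d₂) + (p.2 - d₂) • (0, 1) := by
            ext <;> simp [Prod.smul_def, smul_eq_mul] <;> omega
          rw [this]
          exact add_mem (add_mem (nsmul_mem g1 _) g5) (nsmul_mem g3 _)
  have hgap : ∀ p : ℕ × ℕ, p ∉ S ↔ (p.1 ∉ T ∧ p.2 ≤ d₂ - 1) := by
    intro p
    rw [hmem]
    push_neg
    constructor
    · rintro ⟨h1, h2⟩; exact ⟨h1, by omega⟩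
    · rintro ⟨h1, h2⟩; exact ⟨h1, by omega⟩
  -- Frobenius number facts
  have hub : ∀ n : ℕ, n ∉ T → n ≤ 2 * a₂ := by
    intro n hn
    by_contra hc
    exact hn ((memT_iff a₂ n).mpr (big_memT a₂ n hg ha (by omega)))
  have hbdd : BddAbove {n : ℕ | n ∉ T} := ⟨2 * a₂, fun n hn => hub n hn⟩
  have hone : (1 : ℕ) ∉ T := by
    rw [memT_iff]
    rintro ⟨i, j, hij⟩
    rcases Nat.eq_zero_or_pos j with rfl | hj
    · omega
    · nlinarith
  set F := sSup {n : ℕ | n ∉ T} with hF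
  have hF1 : F ∉ T := Nat.sSup_mem ⟨1, hone⟩ hbdd
  have hF2 : ∀ n : ℕ, n ∉ T → n ≤ F := fun n hn => le_csSup hbdd hn
  constructor
  · ext p
    exact hgap p
  · ext p
    simp only [FA2, Set.mem_setOf_eq, Set.mem_singleton_iff]
    constructor
    · rintro ⟨hp, hmax⟩
      obtain ⟨hp1, hp2⟩ := (hgap p).mp hp
      have hFgap : (F, d₂ - 1) ∉ S := (hgap _).mpr ⟨hF1, le_rfl⟩
      have hle : p ≤ (F, d₂ - 1) := ⟨hF2 p.1 hp1, hp2⟩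
      exact (hmax _ hFgap hle).symm
    · rintro rfl
      refine ⟨(hgap _).mpr ⟨hF1, le_rfl⟩, ?_⟩
      rintro g hg' ⟨hle1, hle2⟩
      obtain ⟨hg1, hg2⟩ := (hgap g).mp hg'
      have := hF2 g.1 hg1
      ext
      · simp at hle1 ⊢; omega
      · simp at hle2 ⊢; omega
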